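/- Let X be a σ-finite measure space and h : X → ℝ^{d+1} measurable. The S-spectrum of the multiplication operator M_h on L²(X) equals the axially symmetric hull of the essential range: σ_S(M_h) = [essran(h)] := { s ∈ ℝ^{d+1} : [s] ∩ essran(h) ≠ ∅ }. -/

import Mathlib

noncomputable section

open scoped BigOperators

/-- The negative-definite quadratic form on `Fin d → ℝ`, so that the Clifford
algebra generators satisfy `eᵢ² = -1` and anticommute. -/
def negQ (d : ℕ) : QuadraticForm ℝ (Fin d → ℝ) :=
  QuadraticMap.weightedSumSquares ℝ (fun _ : Fin d => (-1 : ℝ))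

/-- The real Clifford algebra ℝ_d. -/
abbrev Cl (d : ℕ) : Type := CliffordAlgebra (negQ d)

/-- The paravector `s₀ + s₁e₁ + ⋯ + s_d e_d`. -/
def pv {d : ℕ} (s₀ : ℝ) (v : Fin d → ℝ) : Cl d :=
  algebraMap ℝ (Cl d) s₀ + CliffordAlgebra.ι (negQ d) v

/-- The Clifford conjugate `s₀ - s₁e₁ - ⋯ - s_d e_d` of a paravector. -/
def pvConj {d : ℕ} (s₀ : ℝ) (v : Fin d → ℝ) : Cl d :=
  algebraMap ℝ (Cl d) s₀ - CliffordAlgebra.ι (negQ d) v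

/-- The squared modulus `s₀² + s₁² + ⋯ + s_d²` of a paravector. -/
def pvNormSq {d : ℕ} (s₀ : ℝ) (v : Fin d → ℝ) : ℝ := s₀ ^ 2 + ∑ i, v i ^ 2

/-- Clifford conjugation on ℝ_d (composite of involution and reversal). -/
def clConj {d : ℕ} (a : Cl d) : Cl d :=
  CliffordAlgebra.reverse (CliffordAlgebra.involute a)

open MeasureTheory

/-- Euclidean distance between paravectors `(p₀,pv)` in ℝ^{d+1}. -/
def pDist {d : ℕ} (p q : ℝ × (Fin d → ℝ)) : ℝ :=
  Real.sqrt ((p.1 - q.1) ^ 2 + ∑ i, (p.2 i - q.2 i) ^ 2)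

/-- The multiplier function `h² - 2s₀h + |s|²` of `Q_s[M_h]`. -/
def qMul {d : ℕ} {X : Type*} (h₀ : X → ℝ) (hv : X → Fin d → ℝ)
    (s₀ : ℝ) (sv : Fin d → ℝ) (x : X) : Cl d :=
  pv (h₀ x) (hv x) * pv (h₀ x) (hv x) - (2 * s₀) • pv (h₀ x) (hv x)
    + pvNormSq s₀ sv • (1 : Cl d)

/-- `Q_s[M_h]` has a bounded, everywhere defined inverse on `L²(X, ℝ_d)`:
it is injective, surjective onto `L²` and has a bounded inverse. -/
def QsMulInvertible {d : ℕ} {X : Type*} [MeasurableSpace X] (μ : Measure X)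
    (ℓ : Cl d ≃ₗ[ℝ] EuclideanSpace ℝ (Fin (2 ^ d)))
    (h₀ : X → ℝ) (hv : X → Fin d → ℝ) (s₀ : ℝ) (sv : Fin d → ℝ) : Prop :=
  (∀ f : X → Cl d, MemLp (fun x => ℓ (f x)) 2 μ →
    MemLp (fun x => ℓ (qMul h₀ hv s₀ sv x * f x)) 2 μ →
    (fun x => qMul h₀ hv s₀ sv x * f x) =ᵐ[μ] 0 → f =ᵐ[μ] 0) ∧
  (∀ w : X → Cl d, MemLp (fun x => ℓ (w x)) 2 μ →
    ∃ f : X → Cl d, MemLp (fun x => ℓ (f x)) 2 μ ∧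
      MemLp (fun x => ℓ (qMul h₀ hv s₀ sv x * f x)) 2 μ ∧
      (fun x => qMul h₀ hv s₀ sv x * f x) =ᵐ[μ] w) ∧
  (∃ C : ℝ, 0 ≤ C ∧ ∀ f : X → Cl d, MemLp (fun x => ℓ (f x)) 2 μ →
    MemLp (fun x => ℓ (qMul h₀ hv s₀ sv x * f x)) 2 μ →
    eLpNorm (fun x => ℓ (f x)) 2 μ
      ≤ ENNReal.ofReal C * eLpNorm (fun x => ℓ (qMul h₀ hv s₀ sv x * f x)) 2 μ)

/-- The essential range of the paravector-valued function `h = (h₀, hv)`. -/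
def essRan {d : ℕ} {X : Type*} [MeasurableSpace X] (μ : Measure X)
    (h₀ : X → ℝ) (hv : X → Fin d → ℝ) : Set (ℝ × (Fin d → ℝ)) :=
  {s | ∀ ε : ℝ, 0 < ε → μ {x | pDist (h₀ x, hv x) s < ε} ≠ 0}

section Aux

open CliffordAlgebra

lemma negQ_apply {d : ℕ} (v : Fin d → ℝ) : negQ d v = -∑ i, v i ^ 2 := by
  simp [negQ, QuadraticMap.weightedSumSquares_apply, pow_two]

lemma pv_mul {d : ℕ} (a b t : ℝ) (v : Fin d → ℝ) :
    pv a v * pv b (t • v) = pv (a*b - t * ∑ i, v i ^ 2) ((a*t + b) • v) := by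
  have h1 : CliffordAlgebra.ι (negQ d) v * CliffordAlgebra.ι (negQ d) v
      = (-∑ i, v i ^ 2) • (1 : Cl d) := by
    rw [CliffordAlgebra.ι_sq_scalar, negQ_apply, Algebra.algebraMap_eq_smul_one]
  simp only [pv, _root_.map_smul, Algebra.algebraMap_eq_smul_one, add_mul, mul_add,
    smul_mul_assoc, mul_smul_comm, one_mul, mul_one, h1]
  module

lemma pv_zero_right {d : ℕ} (a : ℝ) : pv a (0 : Fin d → ℝ) = algebraMap ℝ (Cl d) a := by
  simp [pv]

lemma pv_mul_conj {d : ℕ} (a : ℝ) (v : Fin d → ℝ) :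
    pv a v * pv a (-v) = algebraMap ℝ (Cl d) (pvNormSq a v) := by
  have := pv_mul a a (-1) v
  simp only [neg_one_smul, mul_neg_one, neg_add_cancel, zero_smul] at this
  rw [this, pv_zero_right, pvNormSq]
  ring_nf

lemma qMul_eq {d : ℕ} {X : Type*} (h₀ : X → ℝ) (hv : X → Fin d → ℝ)
    (s₀ : ℝ) (sv : Fin d → ℝ) (x : X) :
    qMul h₀ hv s₀ sv x
      = pv ((h₀ x - s₀) ^ 2 - (∑ i, hv x i ^ 2) + ∑ i, sv i ^ 2)
          ((2 * (h₀ x - s₀)) • hv x) := by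
  have hs := pv_mul (h₀ x) (h₀ x) 1 (hv x)
  rw [one_smul] at hs
  rw [qMul, hs]
  simp only [pv, pvNormSq, _root_.map_smul, Algebra.algebraMap_eq_smul_one, smul_add]
  module

end Aux
section Aux2

variable {d : ℕ} {X : Type*} [MeasurableSpace X]

lemma euclid_decomp {n : ℕ} (z : EuclideanSpace ℝ (Fin n)) :
    ∑ i, z i • EuclideanSpace.single i (1:ℝ) = z := by
  simpa [EuclideanSpace.basisFun_apply, EuclideanSpace.basisFun_repr] using
    (EuclideanSpace.basisFun (Fin n) ℝ).sum_repr z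

lemma measurable_ℓ_pv (ℓ : Cl d ≃ₗ[ℝ] EuclideanSpace ℝ (Fin (2 ^ d)))
    {u : X → ℝ} {v : X → Fin d → ℝ} (hu : Measurable u) (hvm : Measurable v) :
    Measurable fun x => ℓ (pv (u x) (v x)) := by
  have hdec : ∀ x, ℓ (pv (u x) (v x)) = u x • ℓ 1
      + ∑ i, v x i • ℓ (CliffordAlgebra.ι (negQ d) (Pi.single i 1)) := by
    intro x
    have h1 : (v x) = ∑ i, v x i • (Pi.single i (1:ℝ) : Fin d → ℝ) := by
      conv_lhs => rw [← Finset.univ_sum_single (v x)]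
      refine Finset.sum_congr rfl fun i _ => ?_
      funext j
      simp [Pi.single_apply, mul_ite]
    have h2 : (CliffordAlgebra.ι (negQ d)) (v x)
        = ∑ i, v x i • (CliffordAlgebra.ι (negQ d)) (Pi.single i (1:ℝ) : Fin d → ℝ) := by
      conv_lhs => rw [h1]
      rw [map_sum]
      simp [_root_.map_smul]
    rw [pv, Algebra.algebraMap_eq_smul_one, map_add, _root_.map_smul, h2, map_sum]
    simp [_root_.map_smul]
  simp only [hdec]
  exact (hu.smul_const _).add
    (Finset.measurable_sum _ fun i _ => (hvm.eval.smul_const _))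

lemma measurable_ℓ_qMul (ℓ : Cl d ≃ₗ[ℝ] EuclideanSpace ℝ (Fin (2 ^ d)))
    {h₀ : X → ℝ} {hv : X → Fin d → ℝ} (hm₀ : Measurable h₀) (hmv : Measurable hv)
    (s₀ : ℝ) (sv : Fin d → ℝ) :
    Measurable fun x => ℓ (qMul h₀ hv s₀ sv x) := by
  simp only [qMul_eq]
  refine measurable_ℓ_pv ℓ ?_ ?_
  · have hR : Measurable fun x => ∑ i, hv x i ^ 2 :=
      Finset.measurable_sum _ fun i _ => hmv.eval.pow_const 2
    exact (((hm₀.sub_const s₀).pow_const 2).sub hR).add_const _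
  · refine measurable_pi_lambda _ fun i => ?_
    simp only [Pi.smul_apply, smul_eq_mul]
    exact ((hm₀.sub_const s₀).const_mul 2).mul hmv.eval

lemma aesm_ℓ_mul {μ : MeasureTheory.Measure X}
    (ℓ : Cl d ≃ₗ[ℝ] EuclideanSpace ℝ (Fin (2 ^ d))) {u w : X → Cl d}
    (hu : MeasureTheory.AEStronglyMeasurable (fun x => ℓ (u x)) μ)
    (hw : MeasureTheory.AEStronglyMeasurable (fun x => ℓ (w x)) μ) :
    MeasureTheory.AEStronglyMeasurable (fun x => ℓ (u x * w x)) μ := by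
  classical
  set L : Fin (2 ^ d) → EuclideanSpace ℝ (Fin (2 ^ d)) →ₗ[ℝ] EuclideanSpace ℝ (Fin (2 ^ d)) :=
    fun i => ℓ.toLinearMap ∘ₗ LinearMap.mulLeft ℝ (ℓ.symm (EuclideanSpace.single i 1)) ∘ₗ
      ℓ.symm.toLinearMap with hL
  have key : ∀ x, ℓ (u x * w x) = ∑ i, (ℓ (u x) i) • L i (ℓ (w x)) := by
    intro x
    have hu' : u x = ∑ i, ℓ (u x) i • ℓ.symm (EuclideanSpace.single i 1) := by
      apply ℓ.injective
      rw [map_sum]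
      simp only [_root_.map_smul, LinearEquiv.apply_symm_apply]
      exact (euclid_decomp (ℓ (u x))).symm
    conv_lhs => rw [hu']
    rw [Finset.sum_mul, map_sum]
    refine Finset.sum_congr rfl fun i _ => ?_
    simp [hL, smul_mul_assoc, _root_.map_smul, LinearMap.mulLeft_apply]
  have hsum : MeasureTheory.AEStronglyMeasurable
      (fun x => ∑ i, (ℓ (u x) i) • L i (ℓ (w x))) μ := by
    refine Finset.aestronglyMeasurable_fun_sum _ fun i _ => ?_
    have h1 : MeasureTheory.AEStronglyMeasurable (fun x => ℓ (u x) i) μ :=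
      (EuclideanSpace.proj (𝕜 := ℝ) i).continuous.comp_aestronglyMeasurable hu
    have h2 : MeasureTheory.AEStronglyMeasurable (fun x => L i (ℓ (w x))) μ :=
      (L i).continuous_of_finiteDimensional.comp_aestronglyMeasurable hw
    exact h1.smul h2
  exact hsum.congr (Filter.EventuallyEq.of_eq (funext fun x => (key x).symm))

end Aux2
section Aux3

variable {d : ℕ}

lemma norm_ℓ_pv (ℓ : Cl d ≃ₗ[ℝ] EuclideanSpace ℝ (Fin (2 ^ d)))
    (hnorm : ∀ (t₀ : ℝ) (tv : Fin d → ℝ), ‖ℓ (pv t₀ tv)‖ ^ 2 = pvNormSq t₀ tv)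
    (a : ℝ) (v : Fin d → ℝ) : ‖ℓ (pv a v)‖ = Real.sqrt (pvNormSq a v) := by
  rw [← hnorm a v, Real.sqrt_sq (norm_nonneg _)]

lemma norm_ℓ_one (ℓ : Cl d ≃ₗ[ℝ] EuclideanSpace ℝ (Fin (2 ^ d)))
    (hnorm : ∀ (t₀ : ℝ) (tv : Fin d → ℝ), ‖ℓ (pv t₀ tv)‖ ^ 2 = pvNormSq t₀ tv) :
    ‖ℓ (1 : Cl d)‖ = 1 := by
  have h1 : pv 1 (0 : Fin d → ℝ) = 1 := by simp [pv]
  have h2 := norm_ℓ_pv ℓ hnorm 1 0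
  rw [h1] at h2
  simp [pvNormSq] at h2
  exact h2

lemma pvNormSq_qMul_eq (a R P : ℝ) (w : Fin d → ℝ) (hw : ∑ i, w i ^ 2 = R) :
    pvNormSq (a ^ 2 - R + P) ((2 * a) • w) = (a ^ 2 - R + P) ^ 2 + 4 * a ^ 2 * R := by
  rw [pvNormSq]
  have : ∑ i, ((2 * a) • w) i ^ 2 = 4 * a ^ 2 * R := by
    simp only [Pi.smul_apply, smul_eq_mul, mul_pow, ← Finset.mul_sum, hw]
    ring
  rw [this]

lemma ip_le_sqrt_mul_sqrt {R P ip : ℝ} (hR : 0 ≤ R) (hP : 0 ≤ P) (hip : ip ^ 2 ≤ R * P) :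
    ip ≤ Real.sqrt R * Real.sqrt P := by
  have h0 : 0 ≤ Real.sqrt R * Real.sqrt P := by positivity
  rcases le_or_gt ip 0 with h | h
  · linarith
  · nlinarith [Real.sq_sqrt hR, Real.sq_sqrt hP]

lemma real_key_upper {a R P pd e ip : ℝ} (hR : 0 ≤ R) (hP : 0 ≤ P) (hpd : 0 ≤ pd)
    (hip : ip ≤ Real.sqrt R * Real.sqrt P)
    (hpd2 : pd ^ 2 = a ^ 2 + R - 2 * ip + P) (hpe : pd ≤ e) :
    (a ^ 2 - R + P) ^ 2 + 4 * a ^ 2 * R ≤ (e * (e + 2 * Real.sqrt P)) ^ 2 := by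
  set r := Real.sqrt R with hr
  set p := Real.sqrt P with hp
  have hr0 : 0 ≤ r := Real.sqrt_nonneg R
  have hp0 : 0 ≤ p := Real.sqrt_nonneg P
  have hrr : r ^ 2 = R := Real.sq_sqrt hR
  have hpp : p ^ 2 = P := Real.sq_sqrt hP
  have he : 0 ≤ e := le_trans hpd hpe
  have hfact : (a ^ 2 - R + P) ^ 2 + 4 * a ^ 2 * R
      = (a ^ 2 + (r - p) ^ 2) * (a ^ 2 + (r + p) ^ 2) := by
    rw [← hrr, ← hpp]; ring
  have h1 : a ^ 2 + (r - p) ^ 2 ≤ pd ^ 2 := by nlinarith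
  have h3 : r - p ≤ pd := by nlinarith [sq_nonneg (pd + r - p), sq_nonneg a]
  have h4 : a ^ 2 + (r + p) ^ 2 ≤ (pd + 2 * p) ^ 2 := by
    nlinarith [mul_nonneg hp0 (show (0:ℝ) ≤ pd + p - r by linarith)]
  have h5 : pd ^ 2 ≤ e ^ 2 := by nlinarith
  have h6 : (pd + 2 * p) ^ 2 ≤ (e + 2 * p) ^ 2 := by nlinarith
  calc (a ^ 2 - R + P) ^ 2 + 4 * a ^ 2 * R
      = (a ^ 2 + (r - p) ^ 2) * (a ^ 2 + (r + p) ^ 2) := hfact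
    _ ≤ pd ^ 2 * (pd + 2 * p) ^ 2 := by
        apply mul_le_mul h1 h4 (by positivity) (by positivity)
    _ ≤ e ^ 2 * (e + 2 * p) ^ 2 := by
        apply mul_le_mul h5 h6 (by positivity) (by positivity)
    _ = (e * (e + 2 * p)) ^ 2 := by ring

lemma real_key_lower {a R P e : ℝ} (hR : 0 ≤ R) (hP : 0 ≤ P) (he : 0 ≤ e)
    (hD : e ^ 2 ≤ a ^ 2 + (Real.sqrt R - Real.sqrt P) ^ 2) :
    e ^ 4 ≤ (a ^ 2 - R + P) ^ 2 + 4 * a ^ 2 * R := by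
  set r := Real.sqrt R with hr
  set p := Real.sqrt P with hp
  have hr0 : 0 ≤ r := Real.sqrt_nonneg R
  have hp0 : 0 ≤ p := Real.sqrt_nonneg P
  have hrr : r ^ 2 = R := Real.sq_sqrt hR
  have hpp : p ^ 2 = P := Real.sq_sqrt hP
  have hfact : (a ^ 2 - R + P) ^ 2 + 4 * a ^ 2 * R
      = (a ^ 2 + (r - p) ^ 2) * (a ^ 2 + (r + p) ^ 2) := by
    rw [← hrr, ← hpp]; ring
  have hDE : a ^ 2 + (r - p) ^ 2 ≤ a ^ 2 + (r + p) ^ 2 := by nlinarith [mul_nonneg hr0 hp0]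
  calc e ^ 4 = e ^ 2 * e ^ 2 := by ring
    _ ≤ (a ^ 2 + (r - p) ^ 2) * (a ^ 2 + (r + p) ^ 2) := by
        apply mul_le_mul hD (le_trans hD hDE) (by positivity) (by positivity)
    _ = _ := hfact.symm

lemma pDist_nonneg (p q : ℝ × (Fin d → ℝ)) : 0 ≤ pDist p q := Real.sqrt_nonneg _

lemma pDist_sq (p q : ℝ × (Fin d → ℝ)) :
    pDist p q ^ 2 = (p.1 - q.1) ^ 2 + ∑ i, (p.2 i - q.2 i) ^ 2 := by
  rw [pDist, Real.sq_sqrt (by positivity)]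

def emb (p : ℝ × (Fin d → ℝ)) : EuclideanSpace ℝ (Fin (d + 1)) :=
  (WithLp.equiv 2 (Fin (d + 1) → ℝ)).symm (Fin.cons p.1 p.2)

lemma dist_emb (p q : ℝ × (Fin d → ℝ)) : dist (emb p) (emb q) = pDist p q := by
  rw [EuclideanSpace.dist_eq, pDist]
  congr 1
  rw [Fin.sum_univ_succ]
  simp [emb, WithLp.equiv_symm_apply, Real.dist_eq, sq_abs]

lemma continuous_emb : Continuous (emb (d := d)) := by
  refine (PiLp.continuous_toLp 2 (fun _ : Fin (d+1) => ℝ)).comp ?_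
  refine continuous_pi fun i => ?_
  refine Fin.cases ?_ ?_ i
  · simpa using continuous_fst
  · intro j
    exact (continuous_apply j).comp continuous_snd

end Aux3
section Aux4

open MeasureTheory

lemma exists_eps_null {X : Type*} [MeasurableSpace X] (μ : Measure X)
    {d : ℕ} (h₀ : X → ℝ) (hv : X → Fin d → ℝ) (s₀ : ℝ) (sv : Fin d → ℝ)
    (hno : ∀ t : ℝ × (Fin d → ℝ), t.1 = s₀ → ∑ i, t.2 i ^ 2 = ∑ i, sv i ^ 2 →
      t ∉ essRan μ h₀ hv) :
    ∃ ε₀ : ℝ, 0 < ε₀ ∧ ∀ᵐ x ∂μ, ε₀ ^ 2 ≤ (h₀ x - s₀) ^ 2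
      + (Real.sqrt (∑ i, hv x i ^ 2) - Real.sqrt (∑ i, sv i ^ 2)) ^ 2 := by
  classical
  set P : ℝ := ∑ i, sv i ^ 2 with hPdef
  have hP : 0 ≤ P := by positivity
  set S : Set (ℝ × (Fin d → ℝ)) := {t | t.1 = s₀ ∧ ∑ i, t.2 i ^ 2 = P} with hSdef
  set K : Set (EuclideanSpace ℝ (Fin (d + 1))) := emb '' S with hKdef
  have hSc : IsCompact S := by
    apply Metric.isCompact_of_isClosed_isBounded
    · exact (isClosed_eq continuous_fst continuous_const).inter
        (isClosed_eq (by fun_prop) continuous_const)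
    · rw [Metric.isBounded_iff_subset_closedBall 0]
      refine ⟨|s₀| + Real.sqrt P, fun t ht => ?_⟩
      rw [Metric.mem_closedBall, dist_zero_right, Prod.norm_def]
      refine max_le ?_ ?_
      · rw [Real.norm_eq_abs, ht.1]
        have := Real.sqrt_nonneg P
        linarith
      · refine (pi_norm_le_iff_of_nonneg (by positivity)).mpr fun i => ?_
        rw [Real.norm_eq_abs, ← Real.sqrt_sq_eq_abs]
        have h1 : t.2 i ^ 2 ≤ P := by
          rw [← ht.2]
          exact Finset.single_le_sum (f := fun j => t.2 j ^ 2)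
            (fun j _ => sq_nonneg _) (Finset.mem_univ i)
        have := abs_nonneg s₀
        have := Real.sqrt_le_sqrt h1
        linarith
  have hKc : IsCompact K := hSc.image continuous_emb
  have hKprop : ∀ y : K, ∃ ε : ℝ, 0 < ε ∧
      μ {x | dist (emb (h₀ x, hv x)) (y : EuclideanSpace ℝ (Fin (d + 1))) < ε} = 0 := by
    rintro ⟨y, t, htS, rfl⟩
    have := hno t htS.1 htS.2
    simp only [essRan, Set.mem_setOf_eq, not_forall] at this
    obtain ⟨ε, hε, h0⟩ := this
    push_neg at h0
    refine ⟨ε, hε, ?_⟩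
    have : {x | dist (emb (h₀ x, hv x)) (emb t) < ε} = {x | pDist (h₀ x, hv x) t < ε} := by
      ext x; simp [dist_emb]
    rw [this]
    exact h0
  choose εf hεf hμf using hKprop
  have hcov : K ⊆ ⋃ y : K, Metric.ball (y : EuclideanSpace ℝ (Fin (d + 1))) (εf y / 2) := by
    intro z hz
    exact Set.mem_iUnion.mpr ⟨⟨z, hz⟩, Metric.mem_ball_self (by have := hεf ⟨z, hz⟩; linarith)⟩
  obtain ⟨F, hF⟩ := hKc.elim_finite_subcover
    (fun y : K => Metric.ball (y : EuclideanSpace ℝ (Fin (d + 1))) (εf y / 2))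
    (fun y => Metric.isOpen_ball) hcov
  have hy0K : emb (s₀, sv) ∈ K := ⟨(s₀, sv), ⟨rfl, rfl⟩, rfl⟩
  have hFne : F.Nonempty := by
    obtain ⟨y, hyF, -⟩ := Set.mem_iUnion₂.mp (hF hy0K)
    exact ⟨y, hyF⟩
  refine ⟨F.inf' hFne fun y => εf y / 2, ?_, ?_⟩
  · rw [Finset.lt_inf'_iff]
    exact fun y _ => by have := hεf y; linarith
  · set ε₀ : ℝ := F.inf' hFne fun y => εf y / 2 with hε₀def
    have hε₀ : 0 < ε₀ := by
      rw [hε₀def, Finset.lt_inf'_iff]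
      exact fun y _ => by have := hεf y; linarith
    have hnull : μ (⋃ y ∈ F, {x | dist (emb (h₀ x, hv x))
        (y : EuclideanSpace ℝ (Fin (d + 1))) < εf y}) = 0 :=
      (measure_biUnion_null_iff F.countable_toSet).mpr fun y _ => hμf y
    filter_upwards [(measure_eq_zero_iff_ae_notMem).mp hnull] with x hx
    by_contra hlt
    push_neg at hlt
    set Rx : ℝ := ∑ i, hv x i ^ 2 with hRxdef
    have hRx : 0 ≤ Rx := by positivity
    set rx : ℝ := Real.sqrt Rx with hrxdef
    have hrx2 : rx ^ 2 = Rx := Real.sq_sqrt hRx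
    set tm : ℝ × (Fin d → ℝ) :=
      (s₀, if rx = 0 then sv else (Real.sqrt P / rx) • hv x) with htmdef
    have htmS : tm ∈ S := by
      refine ⟨rfl, ?_⟩
      by_cases h : rx = 0
      · simp only [htmdef, h, if_true]
        exact hPdef.symm
      · simp only [htmdef, if_neg h]
        have hRx0 : Rx ≠ 0 := fun hc => h (by rw [hrxdef, hc, Real.sqrt_zero])
        have : ∑ i, ((Real.sqrt P / rx) • hv x) i ^ 2
            = (Real.sqrt P / rx) ^ 2 * Rx := by
          simp only [Pi.smul_apply, smul_eq_mul, mul_pow, ← Finset.mul_sum, hRxdef]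
        rw [this, div_pow, Real.sq_sqrt hP, hrx2]
        field_simp
    have hdist : pDist (h₀ x, hv x) tm ^ 2 = (h₀ x - s₀) ^ 2 + (rx - Real.sqrt P) ^ 2 := by
      rw [pDist_sq]
      congr 1
      by_cases h : rx = 0
      · have hRx0 : Rx = 0 := by
          have h2 := hrx2
          rw [h] at h2
          simpa using h2.symm
        have hz : ∀ i, hv x i = 0 := by
          intro i
          have h5 := (Finset.sum_eq_zero_iff_of_nonneg
            (fun j (_ : j ∈ Finset.univ) => sq_nonneg (hv x j))).mp
            (by rw [← hRxdef]; exact hRx0) i (Finset.mem_univ i)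
          exact pow_eq_zero_iff (n := 2) (by norm_num) |>.mp h5
        simp only [htmdef, h, if_true]
        simp only [hz, zero_sub, neg_sq, h]
        rw [Real.sq_sqrt hP, hPdef]
      · simp only [htmdef, if_neg h, Pi.smul_apply, smul_eq_mul]
        have : ∀ i, hv x i - Real.sqrt P / rx * hv x i = (1 - Real.sqrt P / rx) * hv x i := by
          intro i; ring
        simp only [this, mul_pow, ← Finset.mul_sum, ← hRxdef]
        rw [← hrx2]
        field_simp
    have hpd : pDist (h₀ x, hv x) tm < ε₀ := by
      nlinarith [pDist_nonneg (h₀ x, hv x) tm, hdist, hlt, hε₀]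
    have hKtm : emb tm ∈ K := ⟨tm, htmS, rfl⟩
    obtain ⟨y, hyF, hy⟩ := Set.mem_iUnion₂.mp (hF hKtm)
    apply hx
    refine Set.mem_iUnion₂.mpr ⟨y, hyF, ?_⟩
    have h1 : dist (emb (h₀ x, hv x)) (y : EuclideanSpace ℝ (Fin (d + 1)))
        ≤ dist (emb (h₀ x, hv x)) (emb tm)
          + dist (emb tm) (y : EuclideanSpace ℝ (Fin (d + 1))) := dist_triangle _ _ _
    have h2 : dist (emb (h₀ x, hv x)) (emb tm) < ε₀ := by rw [dist_emb]; exact hpd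
    have h3 : dist (emb tm) (y : EuclideanSpace ℝ (Fin (d + 1))) < εf y / 2 :=
      Metric.mem_ball.mp hy
    have h4 : ε₀ ≤ εf y / 2 := Finset.inf'_le _ hyF
    simp only [Set.mem_setOf_eq]
    linarith

end Aux4
section Main

open MeasureTheory

lemma invertible_of_no_hull {d : ℕ} {X : Type*} [MeasurableSpace X] (μ : Measure X)
    (ℓ : Cl d ≃ₗ[ℝ] EuclideanSpace ℝ (Fin (2 ^ d)))
    (hnorm : ∀ (t₀ : ℝ) (tv : Fin d → ℝ), ‖ℓ (pv t₀ tv)‖ ^ 2 = pvNormSq t₀ tv)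
    (hparamul : ∀ (t₀ : ℝ) (tv : Fin d → ℝ) (a : Cl d),
      ‖ℓ (pv t₀ tv * a)‖ = ‖ℓ (pv t₀ tv)‖ * ‖ℓ a‖)
    (h₀ : X → ℝ) (hv : X → Fin d → ℝ)
    (hm₀ : Measurable h₀) (hmv : Measurable hv) (s₀ : ℝ) (sv : Fin d → ℝ)
    (hno : ∀ t : ℝ × (Fin d → ℝ), t.1 = s₀ → ∑ i, t.2 i ^ 2 = ∑ i, sv i ^ 2 →
      t ∉ essRan μ h₀ hv) :
    QsMulInvertible μ ℓ h₀ hv s₀ sv := by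
  classical
  obtain ⟨ε₀, hε₀, hae⟩ := exists_eps_null μ h₀ hv s₀ sv hno
  set P : ℝ := ∑ i, sv i ^ 2 with hPdef
  have hP : 0 ≤ P := by positivity
  set N : X → ℝ := fun x => ((h₀ x - s₀) ^ 2 - (∑ i, hv x i ^ 2) + P) ^ 2
      + 4 * (h₀ x - s₀) ^ 2 * (∑ i, hv x i ^ 2) with hNdef
  have hNval : ∀ x, pvNormSq ((h₀ x - s₀) ^ 2 - (∑ i, hv x i ^ 2) + P)
      ((2 * (h₀ x - s₀)) • hv x) = N x := fun x =>
    pvNormSq_qMul_eq (h₀ x - s₀) (∑ i, hv x i ^ 2) P (hv x) rfl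
  have hNlow : ∀ᵐ x ∂μ, ε₀ ^ 4 ≤ N x := by
    filter_upwards [hae] with x hx
    exact real_key_lower (by positivity) hP hε₀.le hx
  have hnormq : ∀ x, ‖ℓ (qMul h₀ hv s₀ sv x)‖ = Real.sqrt (N x) := by
    intro x
    rw [qMul_eq, norm_ℓ_pv ℓ hnorm, hNval]
  have hsqrtlow : ∀ x, ε₀ ^ 4 ≤ N x → ε₀ ^ 2 ≤ Real.sqrt (N x) := by
    intro x hx
    have h1 : ε₀ ^ 2 = Real.sqrt ((ε₀ ^ 2) ^ 2) := (Real.sqrt_sq (by positivity)).symm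
    rw [h1]
    apply Real.sqrt_le_sqrt
    calc (ε₀ ^ 2) ^ 2 = ε₀ ^ 4 := by ring
      _ ≤ N x := hx
  have hnormlow : ∀ᵐ x ∂μ, ε₀ ^ 2 ≤ ‖ℓ (qMul h₀ hv s₀ sv x)‖ := by
    filter_upwards [hNlow] with x hx
    rw [hnormq]
    exact hsqrtlow x hx
  have hmulnorm : ∀ (x : X) (a : Cl d), ‖ℓ (qMul h₀ hv s₀ sv x * a)‖
      = ‖ℓ (qMul h₀ hv s₀ sv x)‖ * ‖ℓ a‖ := by
    intro x a
    rw [qMul_eq, hparamul, ← qMul_eq]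
  refine ⟨?_, ?_, ?_⟩
  · -- injectivity
    intro f _ _ hf0
    have h0 : ∀ᵐ x ∂μ, qMul h₀ hv s₀ sv x * f x = 0 := hf0
    filter_upwards [h0, hnormlow] with x hx hxl
    have h1 : ‖ℓ (qMul h₀ hv s₀ sv x * f x)‖ = 0 := by rw [hx, map_zero, norm_zero]
    rw [hmulnorm] at h1
    have hq : 0 < ‖ℓ (qMul h₀ hv s₀ sv x)‖ := lt_of_lt_of_le (by positivity) hxl
    have h2 : ‖ℓ (f x)‖ = 0 := by
      rcases mul_eq_zero.mp h1 with h | h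
      · exact absurd h hq.ne'
      · exact h
    have h3 : ℓ (f x) = 0 := norm_eq_zero.mp h2
    simpa using ℓ.map_eq_zero_iff.mp h3
  · -- surjectivity
    intro w hw
    set c₀ : X → ℝ := fun x => (h₀ x - s₀) ^ 2 - (∑ i, hv x i ^ 2) + P with hc₀
    set cv : X → Fin d → ℝ := fun x => (2 * (h₀ x - s₀)) • hv x with hcv
    have hqm : ∀ x, qMul h₀ hv s₀ sv x = pv (c₀ x) (cv x) := fun x =>
      qMul_eq h₀ hv s₀ sv x
    set f : X → Cl d := fun x => (N x)⁻¹ • (pv (c₀ x) (-(cv x)) * w x) with hfdef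
    have hfeq : ∀ᵐ x ∂μ, qMul h₀ hv s₀ sv x * f x = w x := by
      filter_upwards [hNlow] with x hx
      have hNx : 0 < N x := lt_of_lt_of_le (by positivity) hx
      show qMul h₀ hv s₀ sv x * ((N x)⁻¹ • (pv (c₀ x) (-(cv x)) * w x)) = w x
      rw [mul_smul_comm, hqm, ← mul_assoc, pv_mul_conj]
      have h2 : pvNormSq (c₀ x) (cv x) = N x := hNval x
      rw [h2, ← Algebra.smul_def, smul_smul, inv_mul_cancel₀ hNx.ne', one_smul]
    have hmc₀ : Measurable c₀ := by
      have hR : Measurable fun x => ∑ i, hv x i ^ 2 :=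
        Finset.measurable_sum _ fun i _ => hmv.eval.pow_const 2
      exact (((hm₀.sub_const s₀).pow_const 2).sub hR).add_const _
    have hmcv : Measurable fun x => -(cv x) := by
      refine measurable_pi_lambda _ fun i => ?_
      simp only [hcv, Pi.neg_apply, Pi.smul_apply, smul_eq_mul]
      exact (((hm₀.sub_const s₀).const_mul 2).mul hmv.eval).neg
    have hNm : Measurable N := by
      have hR : Measurable fun x => ∑ i, hv x i ^ 2 :=
        Finset.measurable_sum _ fun i _ => hmv.eval.pow_const 2
      exact (hmc₀.pow_const 2).add
        ((((hm₀.sub_const s₀).pow_const 2).const_mul 4).mul hR)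
    have haesm_f : AEStronglyMeasurable (fun x => ℓ (f x)) μ := by
      have h1 : AEStronglyMeasurable (fun x => ℓ (pv (c₀ x) (-(cv x)) * w x)) μ := by
        apply aesm_ℓ_mul ℓ ?_ hw.1
        exact (measurable_ℓ_pv ℓ hmc₀ hmcv).aestronglyMeasurable
      have h2 : (fun x => ℓ (f x))
          = fun x => (N x)⁻¹ • ℓ (pv (c₀ x) (-(cv x)) * w x) := by
        funext x
        show ℓ ((N x)⁻¹ • (pv (c₀ x) (-(cv x)) * w x)) = _
        rw [_root_.map_smul]
      rw [h2]
      exact (hNm.inv.aestronglyMeasurable).smul h1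
    have hpvconj : ∀ x, ‖ℓ (pv (c₀ x) (-(cv x)))‖ = Real.sqrt (N x) := by
      intro x
      rw [norm_ℓ_pv ℓ hnorm]
      congr 1
      have : pvNormSq (c₀ x) (-(cv x)) = pvNormSq (c₀ x) (cv x) := by
        simp [pvNormSq]
      rw [this, hNval]
    have hbound : ∀ᵐ x ∂μ, ‖ℓ (f x)‖ ≤ ‖((ε₀ ^ 2)⁻¹ • fun y => ℓ (w y)) x‖ := by
      filter_upwards [hNlow] with x hx
      have hNx : 0 < N x := lt_of_lt_of_le (by positivity) hx
      have hsN : 0 < Real.sqrt (N x) := Real.sqrt_pos.mpr hNx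
      have h1 : ‖ℓ (f x)‖ = (N x)⁻¹ * (Real.sqrt (N x) * ‖ℓ (w x)‖) := by
        show ‖ℓ ((N x)⁻¹ • (pv (c₀ x) (-(cv x)) * w x))‖ = _
        rw [_root_.map_smul, norm_smul, Real.norm_eq_abs,
          abs_of_nonneg (inv_nonneg.mpr hNx.le), hparamul, hpvconj x]
      have hkey : (N x)⁻¹ * Real.sqrt (N x) = (Real.sqrt (N x))⁻¹ := by
        nth_rewrite 1 [← Real.mul_self_sqrt hNx.le]
        rw [mul_inv]
        field_simp
      have h2 : ‖((ε₀ ^ 2)⁻¹ • fun y => ℓ (w y)) x‖ = (ε₀ ^ 2)⁻¹ * ‖ℓ (w x)‖ := by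
        simp only [Pi.smul_apply, norm_smul, Real.norm_eq_abs]
        rw [abs_of_nonneg (by positivity)]
      rw [h1, h2, ← mul_assoc, hkey]
      apply mul_le_mul_of_nonneg_right _ (norm_nonneg _)
      exact inv_anti₀ (by positivity) (hsqrtlow x hx)
    have hmemf : MemLp (fun x => ℓ (f x)) 2 μ :=
      MemLp.of_le (hw.const_smul ((ε₀ ^ 2)⁻¹)) haesm_f hbound
    have hmemcf : MemLp (fun x => ℓ (qMul h₀ hv s₀ sv x * f x)) 2 μ :=
      MemLp.ae_eq (hfeq.mono fun x hx => (congrArg ℓ hx).symm) hw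
    exact ⟨f, hmemf, hmemcf, hfeq⟩
  · -- bound
    refine ⟨(ε₀ ^ 2)⁻¹, by positivity, ?_⟩
    intro f _ _
    have hb : ∀ᵐ x ∂μ, ‖ℓ (f x)‖
        ≤ ‖((ε₀ ^ 2)⁻¹ • fun y => ℓ (qMul h₀ hv s₀ sv y * f y)) x‖ := by
      filter_upwards [hnormlow] with x hx
      have h2 : ‖((ε₀ ^ 2)⁻¹ • fun y => ℓ (qMul h₀ hv s₀ sv y * f y)) x‖
          = (ε₀ ^ 2)⁻¹ * ‖ℓ (qMul h₀ hv s₀ sv x * f x)‖ := by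
        simp only [Pi.smul_apply, norm_smul, Real.norm_eq_abs]
        rw [abs_of_nonneg (by positivity)]
      rw [h2, hmulnorm]
      have h1 : ε₀ ^ 2 * ‖ℓ (f x)‖ ≤ ‖ℓ (qMul h₀ hv s₀ sv x)‖ * ‖ℓ (f x)‖ :=
        mul_le_mul_of_nonneg_right hx (norm_nonneg _)
      calc ‖ℓ (f x)‖ = (ε₀ ^ 2)⁻¹ * (ε₀ ^ 2 * ‖ℓ (f x)‖) := by field_simp
        _ ≤ (ε₀ ^ 2)⁻¹ * (‖ℓ (qMul h₀ hv s₀ sv x)‖ * ‖ℓ (f x)‖) :=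
            mul_le_mul_of_nonneg_left h1 (by positivity)
    calc eLpNorm (fun x => ℓ (f x)) 2 μ
        ≤ eLpNorm ((ε₀ ^ 2)⁻¹ • fun y => ℓ (qMul h₀ hv s₀ sv y * f y)) 2 μ :=
          eLpNorm_mono_ae hb
      _ = ‖(ε₀ ^ 2)⁻¹‖₊ • eLpNorm (fun y => ℓ (qMul h₀ hv s₀ sv y * f y)) 2 μ :=
          eLpNorm_const_smul _ _ _ _
      _ = ENNReal.ofReal ((ε₀ ^ 2)⁻¹)
            * eLpNorm (fun y => ℓ (qMul h₀ hv s₀ sv y * f y)) 2 μ := by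
          rw [ENNReal.smul_def, ← Real.enorm_eq_ofReal (by positivity)]
          rfl

end Main
section MainA

open MeasureTheory
open scoped ENNReal NNReal

lemma not_invertible_of_mem {d : ℕ} {X : Type*} [MeasurableSpace X] (μ : Measure X)
    [SigmaFinite μ]
    (ℓ : Cl d ≃ₗ[ℝ] EuclideanSpace ℝ (Fin (2 ^ d)))
    (hnorm : ∀ (t₀ : ℝ) (tv : Fin d → ℝ), ‖ℓ (pv t₀ tv)‖ ^ 2 = pvNormSq t₀ tv)
    (hparamul : ∀ (t₀ : ℝ) (tv : Fin d → ℝ) (a : Cl d),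
      ‖ℓ (pv t₀ tv * a)‖ = ‖ℓ (pv t₀ tv)‖ * ‖ℓ a‖)
    (h₀ : X → ℝ) (hv : X → Fin d → ℝ)
    (hm₀ : Measurable h₀) (hmv : Measurable hv) (s₀ : ℝ) (sv : Fin d → ℝ)
    (t : ℝ × (Fin d → ℝ)) (htE : t ∈ essRan μ h₀ hv) (ht1 : t.1 = s₀)
    (ht2 : ∑ i, t.2 i ^ 2 = ∑ i, sv i ^ 2) :
    ¬ QsMulInvertible μ ℓ h₀ hv s₀ sv := by
  classical
  rintro ⟨-, -, C, hC0, hC⟩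
  set P : ℝ := ∑ i, sv i ^ 2 with hPdef
  have hP : 0 ≤ P := by positivity
  set ρ : ℝ := Real.sqrt P with hρdef
  have hρ : 0 ≤ ρ := Real.sqrt_nonneg _
  set ε : ℝ := min 1 (((C + 1) * (1 + 2 * ρ))⁻¹) with hεdef
  have hεpos : 0 < ε := lt_min one_pos (by positivity)
  set M : ℝ := ε * (ε + 2 * ρ) with hMdef
  have hM0 : 0 ≤ M := by positivity
  have hCM : C * M < 1 := by
    have h1 : ε ≤ 1 := min_le_left _ _
    have h2 : ε ≤ ((C + 1) * (1 + 2 * ρ))⁻¹ := min_le_right _ _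
    have h3 : ε + 2 * ρ ≤ 1 + 2 * ρ := by linarith
    have h4 : C * M ≤ C * (((C + 1) * (1 + 2 * ρ))⁻¹ * (1 + 2 * ρ)) := by
      apply mul_le_mul_of_nonneg_left _ hC0
      exact mul_le_mul h2 h3 (by positivity) (by positivity)
    have h5 : ((C + 1) * (1 + 2 * ρ))⁻¹ * (1 + 2 * ρ) = (C + 1)⁻¹ := by
      rw [mul_inv]
      field_simp
    have h6 : C * (C + 1)⁻¹ < 1 := by
      rw [← div_eq_mul_inv]
      exact (div_lt_one (by positivity)).mpr (by linarith)
    calc C * M ≤ C * (((C + 1) * (1 + 2 * ρ))⁻¹ * (1 + 2 * ρ)) := h4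
      _ = C * (C + 1)⁻¹ := by rw [h5]
      _ < 1 := h6
  set A : Set X := {x | pDist (h₀ x, hv x) t < ε} with hAdef
  have hμA : μ A ≠ 0 := htE ε hεpos
  have hAm : MeasurableSet A := by
    have hmd : Measurable fun x => pDist (h₀ x, hv x) t := by
      have hin : Measurable fun x => (h₀ x - t.1) ^ 2 + ∑ i, (hv x i - t.2 i) ^ 2 :=
        ((hm₀.sub_const _).pow_const 2).add
          (Finset.measurable_sum _ fun i _ => (hmv.eval.sub_const _).pow_const 2)
      exact Real.continuous_sqrt.measurable.comp hin
    exact measurableSet_lt hmd measurable_const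
  obtain ⟨B, hBm, hBA, hB0, hBfin⟩ :=
    Measure.exists_subset_measure_lt_top hAm (pos_iff_ne_zero.mpr hμA)
  set f : X → Cl d := B.indicator fun _ => (1 : Cl d) with hfdef
  have hℓf : (fun x => ℓ (f x)) = B.indicator fun _ => ℓ (1 : Cl d) := by
    funext x
    by_cases hx : x ∈ B <;> simp [hfdef, Set.indicator_apply, hx]
  have hmemf : MemLp (fun x => ℓ (f x)) 2 μ := by
    rw [hℓf]
    exact memLp_indicator_const 2 hBm _ (Or.inr hBfin.ne)
  have hℓcf : (fun x => ℓ (qMul h₀ hv s₀ sv x * f x))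
      = B.indicator fun x => ℓ (qMul h₀ hv s₀ sv x) := by
    funext x
    by_cases hx : x ∈ B <;> simp [hfdef, Set.indicator_apply, hx]
  have hptB : ∀ x ∈ B, ‖ℓ (qMul h₀ hv s₀ sv x)‖ ≤ M := by
    intro x hx
    have hxA : pDist (h₀ x, hv x) t < ε := hBA hx
    rw [qMul_eq, norm_ℓ_pv ℓ hnorm,
      pvNormSq_qMul_eq (h₀ x - s₀) (∑ i, hv x i ^ 2) P (hv x) rfl]
    have hpd0 := pDist_nonneg (h₀ x, hv x) t
    set ip : ℝ := ∑ i, hv x i * t.2 i with hipdef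
    have hR : (0:ℝ) ≤ ∑ i, hv x i ^ 2 := by positivity
    have hCS : ip ≤ Real.sqrt (∑ i, hv x i ^ 2) * Real.sqrt P := by
      apply ip_le_sqrt_mul_sqrt hR hP
      have h7 := Finset.sum_mul_sq_le_sq_mul_sq Finset.univ (fun i => hv x i) (fun i => t.2 i)
      rw [ht2] at h7
      exact h7
    have hpd2 : pDist (h₀ x, hv x) t ^ 2
        = (h₀ x - s₀) ^ 2 + (∑ i, hv x i ^ 2) - 2 * ip + P := by
      rw [pDist_sq]
      have hexp : ∀ i : Fin d, (hv x i - t.2 i) ^ 2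
          = hv x i ^ 2 - 2 * (hv x i * t.2 i) + t.2 i ^ 2 := fun i => by ring
      simp only [hexp, Finset.sum_add_distrib, Finset.sum_sub_distrib, ← Finset.mul_sum]
      rw [ht2, ht1]
      simp only [← hipdef, ← hPdef]
      ring
    have hkey := real_key_upper hR hP hpd0 hCS hpd2 hxA.le
    calc Real.sqrt ((((h₀ x - s₀) ^ 2 - ∑ i, hv x i ^ 2) + P) ^ 2
          + 4 * (h₀ x - s₀) ^ 2 * ∑ i, hv x i ^ 2)
        ≤ Real.sqrt ((ε * (ε + 2 * Real.sqrt P)) ^ 2) := by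
          exact Real.sqrt_le_sqrt hkey
      _ = M := by rw [Real.sqrt_sq (by positivity)]
  have hmemcf : MemLp (fun x => ℓ (qMul h₀ hv s₀ sv x * f x)) 2 μ := by
    rw [hℓcf]
    apply MemLp.of_le (memLp_indicator_const 2 hBm (M:ℝ) (Or.inr hBfin.ne))
      (((measurable_ℓ_qMul ℓ hm₀ hmv s₀ sv).indicator hBm).aestronglyMeasurable)
    apply Filter.Eventually.of_forall
    intro x
    by_cases hx : x ∈ B
    · simp only [Set.indicator_of_mem hx]
      rw [Real.norm_eq_abs, abs_of_nonneg hM0]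
      exact hptB x hx
    · simp [Set.indicator_of_notMem hx]
  have hone : ‖ℓ (1 : Cl d)‖ₑ = 1 := by
    rw [← ofReal_norm_eq_enorm, norm_ℓ_one ℓ hnorm, ENNReal.ofReal_one]
  set x2 : ℝ≥0∞ := μ B ^ (1 / (2:ℝ≥0∞).toReal) with hx2def
  have hefn : eLpNorm (fun x => ℓ (f x)) 2 μ = x2 := by
    rw [hℓf, eLpNorm_indicator_const hBm two_ne_zero ENNReal.ofNat_ne_top, hone, one_mul]
  have hecf : eLpNorm (fun x => ℓ (qMul h₀ hv s₀ sv x * f x)) 2 μ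
      ≤ ENNReal.ofReal M * x2 := by
    rw [hℓcf]
    calc eLpNorm (B.indicator fun x => ℓ (qMul h₀ hv s₀ sv x)) 2 μ
        ≤ eLpNorm (B.indicator fun _ => (M:ℝ)) 2 μ := by
          apply eLpNorm_mono_ae
          apply Filter.Eventually.of_forall
          intro x
          by_cases hx : x ∈ B
          · simp only [Set.indicator_of_mem hx]
            rw [Real.norm_eq_abs, abs_of_nonneg hM0]
            exact hptB x hx
          · simp [Set.indicator_of_notMem hx]
      _ = ‖(M:ℝ)‖₊ * x2 := eLpNorm_indicator_const hBm two_ne_zero ENNReal.ofNat_ne_top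
      _ = ENNReal.ofReal M * x2 := by rw [← Real.enorm_eq_ofReal hM0]; rfl
  have hx2pos : x2 ≠ 0 := by
    rw [hx2def]
    apply (ENNReal.rpow_pos (pos_iff_ne_zero.mpr hB0.ne') hBfin.ne).ne'
  have hx2top : x2 ≠ ⊤ := by
    rw [hx2def]
    apply ENNReal.rpow_ne_top_of_nonneg (by norm_num) hBfin.ne
  have hmain := hC f hmemf hmemcf
  rw [hefn] at hmain
  have hchain : x2 ≤ (ENNReal.ofReal C * ENNReal.ofReal M) * x2 := by
    calc x2 ≤ ENNReal.ofReal C * eLpNorm (fun x => ℓ (qMul h₀ hv s₀ sv x * f x)) 2 μ := hmain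
      _ ≤ ENNReal.ofReal C * (ENNReal.ofReal M * x2) := mul_le_mul_right hecf _
      _ = (ENNReal.ofReal C * ENNReal.ofReal M) * x2 := by rw [mul_assoc]
  have hklt : ENNReal.ofReal C * ENNReal.ofReal M < 1 := by
    rw [← ENNReal.ofReal_mul hC0]
    exact ENNReal.ofReal_lt_one.mpr hCM
  have hlt2 : (ENNReal.ofReal C * ENNReal.ofReal M) * x2 < 1 * x2 :=
    by rw [mul_comm _ x2, mul_comm 1 x2]; exact ENNReal.mul_lt_mul_right hx2pos hx2top hklt
  rw [one_mul] at hlt2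
  exact absurd hchain (not_le.mpr hlt2)

end MainA
/-- for σ-finite `X` and measurable paravector-valued `h`, the
`S`-spectrum of the multiplication operator `M_h` on `L²(X, ℝ_d)` is the
axially symmetric hull of the essential range:
`σ_S(M_h) = [essran(h)] = {s : [s] ∩ essran(h) ≠ ∅}`. -/
theorem sSpectrum_of_multiplication_operator {d : ℕ}
    {X : Type*} [MeasurableSpace X] (μ : Measure X) [SigmaFinite μ]
    (ℓ : Cl d ≃ₗ[ℝ] EuclideanSpace ℝ (Fin (2 ^ d)))
    (hnorm : ∀ (t₀ : ℝ) (tv : Fin d → ℝ), ‖ℓ (pv t₀ tv)‖ ^ 2 = pvNormSq t₀ tv)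
    (hparamul : ∀ (t₀ : ℝ) (tv : Fin d → ℝ) (a : Cl d),
      ‖ℓ (pv t₀ tv * a)‖ = ‖ℓ (pv t₀ tv)‖ * ‖ℓ a‖)
    (h₀ : X → ℝ) (hv : X → Fin d → ℝ)
    (hm₀ : Measurable h₀) (hmv : Measurable hv)
    (hmeas : AEStronglyMeasurable (fun x => ℓ (pv (h₀ x) (hv x))) μ) :
    {s : ℝ × (Fin d → ℝ) | ¬ QsMulInvertible μ ℓ h₀ hv s.1 s.2}
      = {s : ℝ × (Fin d → ℝ) | ∃ t ∈ essRan μ h₀ hv,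
          t.1 = s.1 ∧ ∑ i, t.2 i ^ 2 = ∑ i, s.2 i ^ 2} := by
  ext s
  simp only [Set.mem_setOf_eq]
  constructor
  · intro hninv
    by_contra hno
    apply hninv
    apply invertible_of_no_hull μ ℓ hnorm hparamul h₀ hv hm₀ hmv s.1 s.2
    intro t h1 h2 ht
    exact hno ⟨t, ht, h1, h2⟩
  · rintro ⟨t, htE, ht1, ht2⟩
    exact not_invertible_of_mem μ ℓ hnorm hparamul h₀ hv hm₀ hmv s.1 s.2 t htE ht1 ht2
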